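/- Let φ₁₂ : ℂ[Z₆, Z₁₃, Z₁₄, Z₁₅, Z₁₆] → ℂ[t] be the ℂ-algebra homomorphism determined by Z₆ ↦ t⁶, Z₁₃ ↦ t¹³, Z₁₄ ↦ t¹⁴, Z₁₅ ↦ t¹⁵, Z₁₆ ↦ t¹⁶. Then the kernel of φ₁₂ is the ideal generated by the nine polynomials Z₁₃² − Z₆²Z₁₄, Z₁₃Z₁₄ − Z₆²Z₁₅, Z₁₄² − Z₁₃Z₁₅, Z₁₄² − Z₆²Z₁₆, Z₁₃Z₁₆ − Z₁₄Z₁₅, Z₁₅² − Z₆⁵, Z₁₄Z₁₆ − Z₆⁵, Z₁₅Z₁₆ − Z₆³Z₁₃, and Z₁₆² − Z₆³Z₁₄. -/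
import Mathlib

open MvPolynomial

noncomputable section KerAux

abbrev R5 : Type := MvPolynomial (Fin 5) ℂ

def Igen : Ideal R5 :=
  Ideal.span {(X 1 : MvPolynomial (Fin 5) ℂ) ^ 2 - (X 0) ^ 2 * X 2,
    X 1 * X 2 - (X 0) ^ 2 * X 3,
    (X 2) ^ 2 - X 1 * X 3,
    (X 2) ^ 2 - (X 0) ^ 2 * X 4,
    X 1 * X 4 - X 2 * X 3,
    (X 3) ^ 2 - (X 0) ^ 5,
    X 2 * X 4 - (X 0) ^ 5,
    X 3 * X 4 - (X 0) ^ 3 * X 1,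
    (X 4) ^ 2 - (X 0) ^ 3 * X 2}

lemma g1mem : ((X 1 : R5) ^ 2 - (X 0) ^ 2 * X 2) ∈ Igen := Ideal.subset_span (by simp)
lemma g2mem : ((X 1 : R5) * X 2 - (X 0) ^ 2 * X 3) ∈ Igen := Ideal.subset_span (by simp)
lemma g3mem : ((X 2 : R5) ^ 2 - X 1 * X 3) ∈ Igen := Ideal.subset_span (by simp)
lemma g4mem : ((X 2 : R5) ^ 2 - (X 0) ^ 2 * X 4) ∈ Igen := Ideal.subset_span (by simp)
lemma g5mem : ((X 1 : R5) * X 4 - X 2 * X 3) ∈ Igen := Ideal.subset_span (by simp)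
lemma g6mem : ((X 3 : R5) ^ 2 - (X 0) ^ 5) ∈ Igen := Ideal.subset_span (by simp)
lemma g7mem : ((X 2 : R5) * X 4 - (X 0) ^ 5) ∈ Igen := Ideal.subset_span (by simp)
lemma g8mem : ((X 3 : R5) * X 4 - (X 0) ^ 3 * X 1) ∈ Igen := Ideal.subset_span (by simp)
lemma g9mem : ((X 4 : R5) ^ 2 - (X 0) ^ 3 * X 2) ∈ Igen := Ideal.subset_span (by simp)

lemma g10mem : ((X 1 : R5) * X 3 - (X 0) ^ 2 * X 4) ∈ Igen := by
  have h := Igen.sub_mem g4mem g3mem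
  have e : ((X 2 : R5) ^ 2 - (X 0) ^ 2 * X 4) - ((X 2) ^ 2 - X 1 * X 3)
      = X 1 * X 3 - (X 0) ^ 2 * X 4 := by ring
  rwa [e] at h

def Emap : Polynomial ℂ →ₐ[ℂ] R5 := Polynomial.aeval (X 0)

def Lmap (q0 q1 q2 q3 q4 q5 : Polynomial ℂ) : R5 :=
  Emap q0 + Emap q1 * X 1 + Emap q2 * X 2 + Emap q3 * X 3 + Emap q4 * X 4
    + Emap q5 * (X 1 * X 4)

def NFP (p : R5) : Prop :=
  ∃ q0 q1 q2 q3 q4 q5, p - Lmap q0 q1 q2 q3 q4 q5 ∈ Igen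

lemma Emap_mul_Xpow (f : Polynomial ℂ) (n : ℕ) :
    Emap (f * Polynomial.X ^ n) = Emap f * (X 0) ^ n := by
  simp [Emap]

lemma Itrans {A B C : R5} (h1 : A - B ∈ Igen) (h2 : B - C ∈ Igen) : A - C ∈ Igen := by
  have h := Igen.add_mem h1 h2
  rwa [sub_add_sub_cancel] at h

lemma istep {A B w g : R5} (hg : g ∈ Igen) (h : A - B = w * g) : A - B ∈ Igen :=
  h ▸ Ideal.mul_mem_left _ w hg

lemma NFstep {A B : R5} (h : A - B ∈ Igen) (hB : NFP B) : NFP A := by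
  obtain ⟨q0, q1, q2, q3, q4, q5, hq⟩ := hB
  exact ⟨q0, q1, q2, q3, q4, q5, Itrans h hq⟩

lemma baseL (A : R5) (v0 v1 v2 v3 v4 v5 : Polynomial ℂ)
    (h : A = Lmap v0 v1 v2 v3 v4 v5) : NFP A :=
  ⟨v0, v1, v2, v3, v4, v5, by rw [h, sub_self]; exact Igen.zero_mem⟩

lemma Lmap_add (a0 a1 a2 a3 a4 a5 b0 b1 b2 b3 b4 b5 : Polynomial ℂ) :
    Lmap (a0+b0) (a1+b1) (a2+b2) (a3+b3) (a4+b4) (a5+b5)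
      = Lmap a0 a1 a2 a3 a4 a5 + Lmap b0 b1 b2 b3 b4 b5 := by
  simp only [Lmap, map_add]; ring

lemma NFadd {u v : R5} (hu : NFP u) (hv : NFP v) : NFP (u + v) := by
  obtain ⟨a0, a1, a2, a3, a4, a5, ha⟩ := hu
  obtain ⟨b0, b1, b2, b3, b4, b5, hb⟩ := hv
  refine ⟨a0+b0, a1+b1, a2+b2, a3+b3, a4+b4, a5+b5, ?_⟩
  rw [Lmap_add]
  have e : u + v - (Lmap a0 a1 a2 a3 a4 a5 + Lmap b0 b1 b2 b3 b4 b5)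
      = (u - Lmap a0 a1 a2 a3 a4 a5) + (v - Lmap b0 b1 b2 b3 b4 b5) := by ring
  rw [e]; exact Igen.add_mem ha hb

lemma key : ∀ N b c d e : ℕ, 2*(b+c+d+e)+d ≤ N → ∀ f : Polynomial ℂ,
    NFP (Emap f * (X 1 : R5)^b * (X 2)^c * (X 3)^d * (X 4)^e) := by
  intro N
  induction N with
  | zero =>
    intro b c d e h f
    have hb : b = 0 := by omega
    have hc : c = 0 := by omega
    have hd : d = 0 := by omega
    have he : e = 0 := by omega
    subst hb; subst hc; subst hd; subst he
    exact baseL _ f 0 0 0 0 0 (by simp [Lmap])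
  | succ N IH =>
    intro b c d e h f
    by_cases hc1 : 2 ≤ b
    · obtain ⟨b', rfl⟩ := Nat.exists_eq_add_of_le hc1
      refine NFstep (istep (w := Emap f * (X 1:R5)^b' * (X 2)^c * (X 3)^d * (X 4)^e)
        g1mem ?_) ((Emap_mul_Xpow f 2) ▸ IH b' (c+1) d e (by omega) (f * Polynomial.X^2))
      ring
    by_cases hc2 : 1 ≤ b ∧ 1 ≤ c
    · obtain ⟨b', rfl⟩ := Nat.exists_eq_add_of_le hc2.1
      obtain ⟨c', rfl⟩ := Nat.exists_eq_add_of_le hc2.2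
      refine NFstep (istep (w := Emap f * (X 1:R5)^b' * (X 2)^c' * (X 3)^d * (X 4)^e)
        g2mem ?_) ((Emap_mul_Xpow f 2) ▸ IH b' c' (d+1) e (by omega) (f * Polynomial.X^2))
      ring
    by_cases hc3 : 1 ≤ b ∧ 1 ≤ d
    · obtain ⟨b', rfl⟩ := Nat.exists_eq_add_of_le hc3.1
      obtain ⟨d', rfl⟩ := Nat.exists_eq_add_of_le hc3.2
      refine NFstep (istep (w := Emap f * (X 1:R5)^b' * (X 2)^c * (X 3)^d' * (X 4)^e)
        g10mem ?_) ((Emap_mul_Xpow f 2) ▸ IH b' c d' (e+1) (by omega) (f * Polynomial.X^2))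
      ring
    by_cases hc4 : 2 ≤ c
    · obtain ⟨c', rfl⟩ := Nat.exists_eq_add_of_le hc4
      refine NFstep (istep (w := Emap f * (X 1:R5)^b * (X 2)^c' * (X 3)^d * (X 4)^e)
        g4mem ?_) ((Emap_mul_Xpow f 2) ▸ IH b c' d (e+1) (by omega) (f * Polynomial.X^2))
      ring
    by_cases hc5 : 1 ≤ c ∧ 1 ≤ d
    · obtain ⟨c', rfl⟩ := Nat.exists_eq_add_of_le hc5.1
      obtain ⟨d', rfl⟩ := Nat.exists_eq_add_of_le hc5.2
      refine NFstep (istep (w := -(Emap f * (X 1:R5)^b * (X 2)^c' * (X 3)^d' * (X 4)^e))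
        g5mem ?_) (IH (b+1) c' d' (e+1) (by omega) f)
      ring
    by_cases hc6 : 2 ≤ d
    · obtain ⟨d', rfl⟩ := Nat.exists_eq_add_of_le hc6
      refine NFstep (istep (w := Emap f * (X 1:R5)^b * (X 2)^c * (X 3)^d' * (X 4)^e)
        g6mem ?_) ((Emap_mul_Xpow f 5) ▸ IH b c d' e (by omega) (f * Polynomial.X^5))
      ring
    by_cases hc7 : 1 ≤ d ∧ 1 ≤ e
    · obtain ⟨d', rfl⟩ := Nat.exists_eq_add_of_le hc7.1
      obtain ⟨e', rfl⟩ := Nat.exists_eq_add_of_le hc7.2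
      refine NFstep (istep (w := Emap f * (X 1:R5)^b * (X 2)^c * (X 3)^d' * (X 4)^e')
        g8mem ?_) ((Emap_mul_Xpow f 3) ▸ IH (b+1) c d' e' (by omega) (f * Polynomial.X^3))
      ring
    by_cases hc8 : 1 ≤ c ∧ 1 ≤ e
    · obtain ⟨c', rfl⟩ := Nat.exists_eq_add_of_le hc8.1
      obtain ⟨e', rfl⟩ := Nat.exists_eq_add_of_le hc8.2
      refine NFstep (istep (w := Emap f * (X 1:R5)^b * (X 2)^c' * (X 3)^d * (X 4)^e')
        g7mem ?_) ((Emap_mul_Xpow f 5) ▸ IH b c' d e' (by omega) (f * Polynomial.X^5))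
      ring
    by_cases hc9 : 2 ≤ e
    · obtain ⟨e', rfl⟩ := Nat.exists_eq_add_of_le hc9
      refine NFstep (istep (w := Emap f * (X 1:R5)^b * (X 2)^c * (X 3)^d * (X 4)^e')
        g9mem ?_) ((Emap_mul_Xpow f 3) ▸ IH b (c+1) d e' (by omega) (f * Polynomial.X^3))
      ring
    · have hb : b ≤ 1 := by omega
      have hcc : c ≤ 1 := by omega
      have hdd : d ≤ 1 := by omega
      have hee : e ≤ 1 := by omega
      interval_cases b <;> interval_cases c <;> interval_cases d <;> interval_cases e
      · exact baseL _ f 0 0 0 0 0 (by simp [Lmap])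
      · exact baseL _ 0 0 0 0 f 0 (by simp [Lmap])
      · exact baseL _ 0 0 0 f 0 0 (by simp [Lmap])
      · omega
      · exact baseL _ 0 0 f 0 0 0 (by simp [Lmap])
      · omega
      · omega
      · omega
      · exact baseL _ 0 f 0 0 0 0 (by simp [Lmap])
      · exact baseL _ 0 0 0 0 0 f (by simp [Lmap, mul_assoc])
      · omega
      · omega
      · omega
      · omega
      · omega
      · omega
lemma key' (A : R5) (a b c d e : ℕ) (f : Polynomial ℂ)
    (h : A = Emap f * (X 0 : R5)^a * (X 1)^b * (X 2)^c * (X 3)^d * (X 4)^e) :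
    NFP A := by
  have hk := key (2*(b+c+d+e)+d) b c d e le_rfl (f * Polynomial.X^a)
  rw [Emap_mul_Xpow] at hk
  rw [h]
  exact hk

lemma mainNF (p : R5) : NFP p := by
  induction p using MvPolynomial.induction_on with
  | C a =>
      refine key' _ 0 0 0 0 0 (Polynomial.C a) ?_
      simp [Emap, MvPolynomial.algebraMap_eq]
  | add p q hp hq => exact NFadd hp hq
  | mul_X p i hp =>
      obtain ⟨q0, q1, q2, q3, q4, q5, hq⟩ := hp
      have h1 : p * X i - Lmap q0 q1 q2 q3 q4 q5 * X i ∈ Igen := by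
        have h := Ideal.mul_mem_right (X i) _ hq
        rwa [sub_mul] at h
      refine NFstep h1 ?_
      fin_cases i
      · show NFP (Lmap q0 q1 q2 q3 q4 q5 * (X 0 : R5))
        rw [show Lmap q0 q1 q2 q3 q4 q5 * (X 0 : R5)
            = Emap q0 * X 0 + Emap q1 * X 1 * X 0 + Emap q2 * X 2 * X 0
              + Emap q3 * X 3 * X 0 + Emap q4 * X 4 * X 0 + Emap q5 * (X 1 * X 4) * X 0
            from by rw [Lmap]; ring]
        refine NFadd (NFadd (NFadd (NFadd (NFadd ?_ ?_) ?_) ?_) ?_) ?_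
        · exact key' _ 1 0 0 0 0 q0 (by ring)
        · exact key' _ 1 1 0 0 0 q1 (by ring)
        · exact key' _ 1 0 1 0 0 q2 (by ring)
        · exact key' _ 1 0 0 1 0 q3 (by ring)
        · exact key' _ 1 0 0 0 1 q4 (by ring)
        · exact key' _ 1 1 0 0 1 q5 (by ring)
      · show NFP (Lmap q0 q1 q2 q3 q4 q5 * (X 1 : R5))
        rw [show Lmap q0 q1 q2 q3 q4 q5 * (X 1 : R5)
            = Emap q0 * X 1 + Emap q1 * X 1 * X 1 + Emap q2 * X 2 * X 1
              + Emap q3 * X 3 * X 1 + Emap q4 * X 4 * X 1 + Emap q5 * (X 1 * X 4) * X 1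
            from by rw [Lmap]; ring]
        refine NFadd (NFadd (NFadd (NFadd (NFadd ?_ ?_) ?_) ?_) ?_) ?_
        · exact key' _ 0 1 0 0 0 q0 (by ring)
        · exact key' _ 0 2 0 0 0 q1 (by ring)
        · exact key' _ 0 1 1 0 0 q2 (by ring)
        · exact key' _ 0 1 0 1 0 q3 (by ring)
        · exact key' _ 0 1 0 0 1 q4 (by ring)
        · exact key' _ 0 2 0 0 1 q5 (by ring)
      · show NFP (Lmap q0 q1 q2 q3 q4 q5 * (X 2 : R5))
        rw [show Lmap q0 q1 q2 q3 q4 q5 * (X 2 : R5)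
            = Emap q0 * X 2 + Emap q1 * X 1 * X 2 + Emap q2 * X 2 * X 2
              + Emap q3 * X 3 * X 2 + Emap q4 * X 4 * X 2 + Emap q5 * (X 1 * X 4) * X 2
            from by rw [Lmap]; ring]
        refine NFadd (NFadd (NFadd (NFadd (NFadd ?_ ?_) ?_) ?_) ?_) ?_
        · exact key' _ 0 0 1 0 0 q0 (by ring)
        · exact key' _ 0 1 1 0 0 q1 (by ring)
        · exact key' _ 0 0 2 0 0 q2 (by ring)
        · exact key' _ 0 0 1 1 0 q3 (by ring)
        · exact key' _ 0 0 1 0 1 q4 (by ring)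
        · exact key' _ 0 1 1 0 1 q5 (by ring)
      · show NFP (Lmap q0 q1 q2 q3 q4 q5 * (X 3 : R5))
        rw [show Lmap q0 q1 q2 q3 q4 q5 * (X 3 : R5)
            = Emap q0 * X 3 + Emap q1 * X 1 * X 3 + Emap q2 * X 2 * X 3
              + Emap q3 * X 3 * X 3 + Emap q4 * X 4 * X 3 + Emap q5 * (X 1 * X 4) * X 3
            from by rw [Lmap]; ring]
        refine NFadd (NFadd (NFadd (NFadd (NFadd ?_ ?_) ?_) ?_) ?_) ?_
        · exact key' _ 0 0 0 1 0 q0 (by ring)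
        · exact key' _ 0 1 0 1 0 q1 (by ring)
        · exact key' _ 0 0 1 1 0 q2 (by ring)
        · exact key' _ 0 0 0 2 0 q3 (by ring)
        · exact key' _ 0 0 0 1 1 q4 (by ring)
        · exact key' _ 0 1 0 1 1 q5 (by ring)
      · show NFP (Lmap q0 q1 q2 q3 q4 q5 * (X 4 : R5))
        rw [show Lmap q0 q1 q2 q3 q4 q5 * (X 4 : R5)
            = Emap q0 * X 4 + Emap q1 * X 1 * X 4 + Emap q2 * X 2 * X 4
              + Emap q3 * X 3 * X 4 + Emap q4 * X 4 * X 4 + Emap q5 * (X 1 * X 4) * X 4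
            from by rw [Lmap]; ring]
        refine NFadd (NFadd (NFadd (NFadd (NFadd ?_ ?_) ?_) ?_) ?_) ?_
        · exact key' _ 0 0 0 0 1 q0 (by ring)
        · exact key' _ 0 1 0 0 1 q1 (by ring)
        · exact key' _ 0 0 1 0 1 q2 (by ring)
        · exact key' _ 0 0 0 1 1 q3 (by ring)
        · exact key' _ 0 0 0 0 2 q4 (by ring)
        · exact key' _ 0 1 0 0 2 q5 (by ring)

def Amap : Polynomial ℂ →ₐ[ℂ] Polynomial ℂ := Polynomial.aeval (Polynomial.X ^ 6)

lemma coeffA (f : Polynomial ℂ) (n : ℕ) :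
    (Amap f).coeff n = if 6 ∣ n then f.coeff (n / 6) else 0 := by
  induction f using Polynomial.induction_on' with
  | add p q hp hq =>
      simp only [map_add, Polynomial.coeff_add, hp, hq]
      split_ifs <;> simp
  | monomial j a =>
      simp only [Amap, Polynomial.aeval_monomial, ← pow_mul, Polynomial.algebraMap_eq,
        Polynomial.coeff_C_mul, Polynomial.coeff_X_pow, Polynomial.coeff_monomial]
      split_ifs <;> first | (exfalso; omega) | ring

lemma coeff_term (f : Polynomial ℂ) (k n : ℕ) :
    (Amap f * Polynomial.X ^ k).coeff n =
      if k ≤ n ∧ 6 ∣ (n - k) then f.coeff ((n - k) / 6) else 0 := by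
  rw [Polynomial.coeff_mul_X_pow', coeffA]
  split_ifs <;> first | rfl | (exfalso; omega)

def phi12 : R5 →ₐ[ℂ] Polynomial ℂ :=
  MvPolynomial.aeval ![Polynomial.X ^ 6, Polynomial.X ^ 13, Polynomial.X ^ 14, Polynomial.X ^ 15,
    Polynomial.X ^ 16]

lemma phi12_Emap (f : Polynomial ℂ) : phi12 (Emap f) = Amap f := by
  rw [Emap, Amap, ← Polynomial.aeval_algHom_apply]
  congr 1
  simp [phi12]

lemma Igen_le_ker : Igen ≤ RingHom.ker phi12 := by
  rw [Igen, Ideal.span_le]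
  rintro g hg
  simp only [Set.mem_insert_iff, Set.mem_singleton_iff] at hg
  rcases hg with rfl | rfl | rfl | rfl | rfl | rfl | rfl | rfl | rfl <;>
    · simp only [SetLike.mem_coe, RingHom.mem_ker, RingHom.coe_coe, map_sub, map_mul, map_pow,
        phi12, aeval_X, Matrix.cons_val_zero, Matrix.cons_val_one, Matrix.head_cons,
        Matrix.cons_val_two, Matrix.tail_cons, Matrix.cons_val_three, Matrix.cons_val_four]
      ring

lemma q_zero (q0 q1 q2 q3 q4 q5 : Polynomial ℂ)
    (h : Amap q0 * Polynomial.X ^ 0 + Amap q1 * Polynomial.X ^ 13 + Amap q2 * Polynomial.X ^ 14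
      + Amap q3 * Polynomial.X ^ 15 + Amap q4 * Polynomial.X ^ 16
      + Amap q5 * Polynomial.X ^ 29 = 0) :
    q0 = 0 ∧ q1 = 0 ∧ q2 = 0 ∧ q3 = 0 ∧ q4 = 0 ∧ q5 = 0 := by
  refine ⟨?_, ?_, ?_, ?_, ?_, ?_⟩ <;> ext j
  · have hh := congrArg (fun r => Polynomial.coeff r (6*j)) h
    simp only [Polynomial.coeff_add, coeff_term, Polynomial.coeff_zero] at hh
    rw [if_pos (by omega), if_neg (by omega), if_neg (by omega), if_neg (by omega),
      if_neg (by omega), if_neg (by omega)] at hh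
    have hj : (6*j - 0)/6 = j := by omega
    rw [hj] at hh
    simpa using hh
  · have hh := congrArg (fun r => Polynomial.coeff r (6*j + 13)) h
    simp only [Polynomial.coeff_add, coeff_term, Polynomial.coeff_zero] at hh
    rw [if_neg (by omega), if_pos (by omega), if_neg (by omega), if_neg (by omega),
      if_neg (by omega), if_neg (by omega)] at hh
    have hj : (6*j + 13 - 13)/6 = j := by omega
    rw [hj] at hh
    simpa using hh
  · have hh := congrArg (fun r => Polynomial.coeff r (6*j + 14)) h
    simp only [Polynomial.coeff_add, coeff_term, Polynomial.coeff_zero] at hh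
    rw [if_neg (by omega), if_neg (by omega), if_pos (by omega), if_neg (by omega),
      if_neg (by omega), if_neg (by omega)] at hh
    have hj : (6*j + 14 - 14)/6 = j := by omega
    rw [hj] at hh
    simpa using hh
  · have hh := congrArg (fun r => Polynomial.coeff r (6*j + 15)) h
    simp only [Polynomial.coeff_add, coeff_term, Polynomial.coeff_zero] at hh
    rw [if_neg (by omega), if_neg (by omega), if_neg (by omega), if_pos (by omega),
      if_neg (by omega), if_neg (by omega)] at hh
    have hj : (6*j + 15 - 15)/6 = j := by omega
    rw [hj] at hh
    simpa using hh
  · have hh := congrArg (fun r => Polynomial.coeff r (6*j + 16)) h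
    simp only [Polynomial.coeff_add, coeff_term, Polynomial.coeff_zero] at hh
    rw [if_neg (by omega), if_neg (by omega), if_neg (by omega), if_neg (by omega),
      if_pos (by omega), if_neg (by omega)] at hh
    have hj : (6*j + 16 - 16)/6 = j := by omega
    rw [hj] at hh
    simpa using hh
  · have hh := congrArg (fun r => Polynomial.coeff r (6*j + 29)) h
    simp only [Polynomial.coeff_add, coeff_term, Polynomial.coeff_zero] at hh
    rw [if_neg (by omega), if_neg (by omega), if_neg (by omega), if_neg (by omega),
      if_neg (by omega), if_pos (by omega)] at hh
    have hj : (6*j + 29 - 29)/6 = j := by omega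
    rw [hj] at hh
    simpa using hh

end KerAux

/-- `φ₁₂ : ℂ[Z₆, Z₁₃, Z₁₄, Z₁₅, Z₁₆] → ℂ[t]`, `Z₆ ↦ t⁶`, `Z₁₃ ↦ t¹³`, `Z₁₄ ↦ t¹⁴`, `Z₁₅ ↦ t¹⁵`,
`Z₁₆ ↦ t¹⁶`.  Its kernel is generated by the indicated nine binomials.
(Variables: `X 0 = Z₆`, `X 1 = Z₁₃`, `X 2 = Z₁₄`, `X 3 = Z₁₅`, `X 4 = Z₁₆`.) -/
theorem ker_phi12 :
    RingHom.ker (MvPolynomial.aeval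
        (![Polynomial.X ^ 6, Polynomial.X ^ 13, Polynomial.X ^ 14, Polynomial.X ^ 15,
           Polynomial.X ^ 16] :
          Fin 5 → Polynomial ℂ) : MvPolynomial (Fin 5) ℂ →ₐ[ℂ] Polynomial ℂ) =
      Ideal.span {(X 1 : MvPolynomial (Fin 5) ℂ) ^ 2 - (X 0) ^ 2 * X 2,
        X 1 * X 2 - (X 0) ^ 2 * X 3,
        (X 2) ^ 2 - X 1 * X 3,
        (X 2) ^ 2 - (X 0) ^ 2 * X 4,
        X 1 * X 4 - X 2 * X 3,
        (X 3) ^ 2 - (X 0) ^ 5,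
        X 2 * X 4 - (X 0) ^ 5,
        X 3 * X 4 - (X 0) ^ 3 * X 1,
        (X 4) ^ 2 - (X 0) ^ 3 * X 2} := by
  show RingHom.ker phi12 = Igen
  refine le_antisymm ?_ Igen_le_ker
  intro p hp
  rw [RingHom.mem_ker] at hp
  obtain ⟨q0, q1, q2, q3, q4, q5, hq⟩ := mainNF p
  have hL : phi12 (Lmap q0 q1 q2 q3 q4 q5) = 0 := by
    have h2 := Igen_le_ker hq
    rw [RingHom.mem_ker] at h2
    rw [map_sub] at h2
    rw [show phi12 p = 0 from hp, sub_eq_zero] at h2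
    exact h2.symm
  have heq : Amap q0 * Polynomial.X ^ 0 + Amap q1 * Polynomial.X ^ 13
      + Amap q2 * Polynomial.X ^ 14 + Amap q3 * Polynomial.X ^ 15
      + Amap q4 * Polynomial.X ^ 16 + Amap q5 * Polynomial.X ^ 29 = 0 := by
    rw [Lmap] at hL
    simp only [map_add, map_mul, phi12_Emap] at hL
    simp only [phi12, aeval_X, Matrix.cons_val_zero, Matrix.cons_val_one, Matrix.head_cons,
      Matrix.cons_val_two, Matrix.tail_cons, Matrix.cons_val_three, Matrix.cons_val_four] at hL
    linear_combination hL
  obtain ⟨h0, h1, h2, h3, h4, h5⟩ := q_zero _ _ _ _ _ _ heq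
  have hz : Lmap q0 q1 q2 q3 q4 q5 = 0 := by
    rw [h0, h1, h2, h3, h4, h5]; simp [Lmap]
  rw [hz, sub_zero] at hq
  exact hq
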